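/- Let g be the 6-dimensional nilpotent Lie algebra h₄ with abelian complex structure J₀ given by dη¹ = dη² = 0, dη³ = (i/2) η^{1 1̄} + (1/2) η^{1 2̄} + (1/2) η^{2 1̄}. For each a ∈ ℂ with 0 < |a| < 1, define the deformed complex structure J_a by declaring μ¹ = η¹ + a η̄¹ − i a η̄², μ² = η², μ³ = η³ to be of type (1,0). Then J_a admits a (1,0)-basis ω¹,ω²,ω³ with structure equations dω¹ = dω² = 0, dω³ = ω¹² + ω^{1 1̄} + ω^{1 2̄} + D_a ω^{2 2̄}, where D_a = (|a|² − 1)/(4|a|²). -/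

import Mathlib

/- STATEMENT 9.  Exterior-algebra model of h₄ with the abelian complex structure J₀ given by
dη¹ = dη² = 0, dη³ = (i/2)η^{1 1̄} + (1/2)η^{1 2̄} + (1/2)η^{2 1̄}.  σ is the conjugation.
For 0 < |a| < 1, the complex structure J_a has (1,0)-forms spanned by
μ¹ = η¹ + a η̄¹ − i a η̄², μ² = η², μ³ = η³.  Claim: there is a (1,0)-basis ω¹,ω²,ω³ for J_a
(i.e. spanning the same space as μ¹,μ²,μ³) with structure equations
dω¹ = dω² = 0, dω³ = ω¹² + ω^{1 1̄} + ω^{1 2̄} + D_a ω^{2 2̄}, D_a = (|a|²−1)/(4|a|²). -/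

noncomputable section

open Submodule LinearMap

abbrev E : Type := ExteriorAlgebra ℂ (Fin 6 → ℂ)

def η (i : Fin 3) : E := ExteriorAlgebra.ι ℂ (Pi.single (⟨i.1, by omega⟩ : Fin 6) (1 : ℂ))
def ηb (i : Fin 3) : E := ExteriorAlgebra.ι ℂ (Pi.single (⟨i.1 + 3, by omega⟩ : Fin 6) (1 : ℂ))

def IsAntider (d : E →ₗ[ℂ] E) : Prop :=
  d 1 = 0 ∧ ∀ (v : Fin 6 → ℂ) (y : E),
    d (ExteriorAlgebra.ι ℂ v * y) =
      d (ExteriorAlgebra.ι ℂ v) * y - ExteriorAlgebra.ι ℂ v * d y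

set_option maxHeartbeats 4000000 in
theorem deformation_of_h4_abelian_structure_normal_form
    (a : ℂ) (ha0 : 0 < ‖a‖) (ha1 : ‖a‖ < 1)
    (d : E →ₗ[ℂ] E) (hd : IsAntider d)
    (h1 : d (η 0) = 0) (h2 : d (η 1) = 0)
    (h3 : d (η 2) = (Complex.I / 2) • (η 0 * ηb 0) + (1 / 2 : ℂ) • (η 0 * ηb 1)
      + (1 / 2 : ℂ) • (η 1 * ηb 0))
    (h1c : d (ηb 0) = 0) (h2c : d (ηb 1) = 0)
    (h3c : d (ηb 2) = (-(Complex.I) / 2) • (ηb 0 * η 0) + (1 / 2 : ℂ) • (ηb 0 * η 1)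
      + (1 / 2 : ℂ) • (ηb 1 * η 0))
    (σ : E →ₛₗ[starRingEnd ℂ] E)
    (hση : ∀ j : Fin 3, σ (η j) = ηb j) (hσηb : ∀ j : Fin 3, σ (ηb j) = η j)
    (hσmul : ∀ x y : E, σ (x * y) = σ x * σ y)
    (hσd : ∀ x : E, σ (d x) = d (σ x)) :
    ∃ ω1 ω2 ω3 : E,
      span ℂ {ω1, ω2, ω3} =
        span ℂ {η 0 + a • ηb 0 - (Complex.I * a) • ηb 1, η 1, η 2} ∧
      d ω1 = 0 ∧ d ω2 = 0 ∧
      d ω3 = ω1 * ω2 + ω1 * σ ω1 + ω1 * σ ω2 +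
        (((‖a‖ ^ 2 - 1) / (4 * ‖a‖ ^ 2) : ℝ) : ℂ) • (ω2 * σ ω2) := by

  -- abbreviations
  classical
  set Dc : ℂ := (((‖a‖ ^ 2 - 1) / (4 * ‖a‖ ^ 2) : ℝ) : ℂ) with hDc
  set M : E := η 0 + a • ηb 0 - (Complex.I * a) • ηb 1 with hM
  have hane : a ≠ 0 := by
    intro h; rw [h] at ha0; simp at ha0
  have hane' : (starRingEnd ℂ) a ≠ 0 := by
    simpa using hane
  have hcA0 : ((‖a‖ : ℝ) : ℂ) ≠ 0 := by
    simpa using (ne_of_gt ha0)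
  have hKpos : (0:ℝ) < 1 - ‖a‖ ^ 2 := by nlinarith [ha0]
  have hKcast : (1 : ℂ) - ((‖a‖ : ℝ) : ℂ)^2 = ((1 - ‖a‖ ^ 2 : ℝ) : ℂ) := by
    push_cast; ring
  have hK0 : (1 : ℂ) - ((‖a‖ : ℝ) : ℂ)^2 ≠ 0 := by
    rw [hKcast]
    exact_mod_cast (ne_of_gt hKpos)
  have ha2 : a * (starRingEnd ℂ) a = ((‖a‖ : ℝ) : ℂ)^2 := by
    rw [Complex.mul_conj, Complex.normSq_eq_norm_sq]; push_cast; ring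
  obtain ⟨π, hπ2⟩ : ∃ z : ℂ, z ^ 2 =
      -Complex.I * (starRingEnd ℂ) a * (1 - ((‖a‖ : ℝ) : ℂ)^2) :=
    IsAlgClosed.exists_pow_nat_eq _ (n := 2) (by norm_num)
  have hπne : π ≠ 0 := by
    intro h
    rw [h] at hπ2
    simp only [ne_eq, zero_pow, OfNat.ofNat_ne_zero, not_false_eq_true] at hπ2
    exact (mul_ne_zero (mul_ne_zero (by simpa using Complex.I_ne_zero) hane') hK0) hπ2.symm
  have hπc : π * (starRingEnd ℂ) π = ((‖a‖ : ℝ) : ℂ) * (1 - ((‖a‖ : ℝ) : ℂ)^2) := by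
    have h1 : ‖π ^ 2‖ = ‖a‖ * (1 - ‖a‖ ^ 2) := by
      rw [hπ2, norm_mul, norm_mul, hKcast, Complex.norm_of_nonneg hKpos.le, norm_neg, Complex.norm_I,
        Complex.norm_conj, one_mul]
    rw [norm_pow] at h1
    rw [Complex.mul_conj, Complex.normSq_eq_norm_sq, h1]
    push_cast; ring
  have hD4 : Dc * (4 * ((‖a‖ : ℝ) : ℂ)^2) = ((‖a‖ : ℝ) : ℂ)^2 - 1 := by
    rw [hDc]; push_cast
    field_simp
  -- exterior algebra relations
  have swap : ∀ v w : Fin 6 → ℂ, ExteriorAlgebra.ι ℂ w * ExteriorAlgebra.ι ℂ v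
      = -(ExteriorAlgebra.ι ℂ v * ExteriorAlgebra.ι ℂ w) := fun v w =>
    eq_neg_of_add_eq_zero_left (ExteriorAlgebra.ι_add_mul_swap w v)
  have s10 : η 1 * η 0 = -(η 0 * η 1) := swap _ _
  have s20 : ηb 0 * η 0 = -(η 0 * ηb 0) := swap _ _
  have s21 : ηb 0 * η 1 = -(η 1 * ηb 0) := swap _ _
  have s30 : ηb 1 * η 0 = -(η 0 * ηb 1) := swap _ _
  have s31 : ηb 1 * η 1 = -(η 1 * ηb 1) := swap _ _
  have s32 : ηb 1 * ηb 0 = -(ηb 0 * ηb 1) := swap _ _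
  have q0 : η 0 * η 0 = 0 := ExteriorAlgebra.ι_sq_zero _
  have q1 : η 1 * η 1 = 0 := ExteriorAlgebra.ι_sq_zero _
  have qb0 : ηb 0 * ηb 0 = 0 := ExteriorAlgebra.ι_sq_zero _
  have qb1 : ηb 1 * ηb 1 = 0 := ExteriorAlgebra.ι_sq_zero _
  refine ⟨((1 - ((‖a‖ : ℝ) : ℂ)^2) * π) • M
      + (((‖a‖ : ℝ) : ℂ) * (1 - ((‖a‖ : ℝ) : ℂ)^2) * π) • η 1,
    (2 * ((‖a‖ : ℝ) : ℂ) * (((‖a‖ : ℝ) : ℂ) - Complex.I) * π) • M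
      + (2 * ((‖a‖ : ℝ) : ℂ)^2 * (((‖a‖ : ℝ) : ℂ) + Complex.I) * π) • η 1,
    (4 * ((‖a‖ : ℝ) : ℂ)^2 * (1 - ((‖a‖ : ℝ) : ℂ)^2)^3) • η 2,
    ?_, ?_, ?_, ?_⟩
  · -- span equality
    have hdet0 : (4 * ((‖a‖ : ℝ) : ℂ)^2 * (1 - ((‖a‖ : ℝ) : ℂ)^2)^2
        * (starRingEnd ℂ) a) ≠ 0 := by
      exact mul_ne_zero (mul_ne_zero (mul_ne_zero (by norm_num) (pow_ne_zero _ hcA0))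
        (pow_ne_zero _ hK0)) hane'
    have hT0 : (4 * ((‖a‖ : ℝ) : ℂ)^2 * (1 - ((‖a‖ : ℝ) : ℂ)^2)^3) ≠ 0 :=
      mul_ne_zero (mul_ne_zero (by norm_num) (pow_ne_zero _ hcA0)) (pow_ne_zero _ hK0)
    apply le_antisymm
    · rw [span_le]
      rintro x hx
      simp only [Set.mem_insert_iff, Set.mem_singleton_iff] at hx
      have hM1 : M ∈ span ℂ {M, η 1, η 2} := subset_span (by simp)
      have hE1 : η 1 ∈ span ℂ {M, η 1, η 2} := subset_span (by simp)
      have hE2 : η 2 ∈ span ℂ {M, η 1, η 2} := subset_span (by simp)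
      rcases hx with rfl | rfl | rfl
      · exact add_mem (smul_mem _ _ hM1) (smul_mem _ _ hE1)
      · exact add_mem (smul_mem _ _ hM1) (smul_mem _ _ hE1)
      · exact smul_mem _ _ hE2
    · rw [span_le]
      rintro x hx
      simp only [Set.mem_insert_iff, Set.mem_singleton_iff] at hx
      set ω1 : E := ((1 - ((‖a‖ : ℝ) : ℂ)^2) * π) • M
        + (((‖a‖ : ℝ) : ℂ) * (1 - ((‖a‖ : ℝ) : ℂ)^2) * π) • η 1 with hw1
      set ω2 : E := (2 * ((‖a‖ : ℝ) : ℂ) * (((‖a‖ : ℝ) : ℂ) - Complex.I) * π) • M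
        + (2 * ((‖a‖ : ℝ) : ℂ)^2 * (((‖a‖ : ℝ) : ℂ) + Complex.I) * π) • η 1 with hw2
      set ω3 : E := (4 * ((‖a‖ : ℝ) : ℂ)^2 * (1 - ((‖a‖ : ℝ) : ℂ)^2)^3) • η 2 with hw3
      have hm1 : ω1 ∈ span ℂ {ω1, ω2, ω3} := subset_span (by simp)
      have hm2 : ω2 ∈ span ℂ {ω1, ω2, ω3} := subset_span (by simp)
      have hm3 : ω3 ∈ span ℂ {ω1, ω2, ω3} := subset_span (by simp)
      have e1 : (4 * ((‖a‖ : ℝ) : ℂ)^2 * (1 - ((‖a‖ : ℝ) : ℂ)^2)^2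
          * (starRingEnd ℂ) a) • M
          = (2 * ((‖a‖ : ℝ) : ℂ)^2 * (((‖a‖ : ℝ) : ℂ) + Complex.I) * π) • ω1
            - (((‖a‖ : ℝ) : ℂ) * (1 - ((‖a‖ : ℝ) : ℂ)^2) * π) • ω2 := by
        rw [hw1, hw2]
        match_scalars <;>
        first
        | ring1
        | linear_combination (((-4):ℂ)*((‖a‖ : ℝ) : ℂ)^2*Complex.I + ((4):ℂ)*((‖a‖ : ℝ) : ℂ)^4*Complex.I) * hπ2 + (((4):ℂ)*((starRingEnd ℂ) a)*((‖a‖ : ℝ) : ℂ)^2 + ((-8):ℂ)*((starRingEnd ℂ) a)*((‖a‖ : ℝ) : ℂ)^4 + ((4):ℂ)*((starRingEnd ℂ) a)*((‖a‖ : ℝ) : ℂ)^6) * Complex.I_sq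
        | linear_combination (((-4):ℂ)*a*((‖a‖ : ℝ) : ℂ)^2*Complex.I + ((4):ℂ)*a*((‖a‖ : ℝ) : ℂ)^4*Complex.I) * hπ2 + (((4):ℂ)*a*((starRingEnd ℂ) a)*((‖a‖ : ℝ) : ℂ)^2 + ((-8):ℂ)*a*((starRingEnd ℂ) a)*((‖a‖ : ℝ) : ℂ)^4 + ((4):ℂ)*a*((starRingEnd ℂ) a)*((‖a‖ : ℝ) : ℂ)^6) * Complex.I_sq
        | linear_combination (((-4):ℂ)*a*((‖a‖ : ℝ) : ℂ)^2 + ((4):ℂ)*a*((‖a‖ : ℝ) : ℂ)^4) * hπ2 + (((4):ℂ)*π^2*a*((‖a‖ : ℝ) : ℂ)^2 + ((-4):ℂ)*π^2*a*((‖a‖ : ℝ) : ℂ)^4) * Complex.I_sq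
      have e2 : (4 * ((‖a‖ : ℝ) : ℂ)^2 * (1 - ((‖a‖ : ℝ) : ℂ)^2)^2
          * (starRingEnd ℂ) a) • η 1
          = ((1 - ((‖a‖ : ℝ) : ℂ)^2) * π) • ω2
            - (2 * ((‖a‖ : ℝ) : ℂ) * (((‖a‖ : ℝ) : ℂ) - Complex.I) * π) • ω1 := by
        rw [hw1, hw2]
        match_scalars <;>
        first
        | ring1
        | linear_combination (((-4):ℂ)*((‖a‖ : ℝ) : ℂ)^2*Complex.I + ((4):ℂ)*((‖a‖ : ℝ) : ℂ)^4*Complex.I) * hπ2 + (((4):ℂ)*((starRingEnd ℂ) a)*((‖a‖ : ℝ) : ℂ)^2 + ((-8):ℂ)*((starRingEnd ℂ) a)*((‖a‖ : ℝ) : ℂ)^4 + ((4):ℂ)*((starRingEnd ℂ) a)*((‖a‖ : ℝ) : ℂ)^6) * Complex.I_sq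
        | linear_combination (((-4):ℂ)*a*((‖a‖ : ℝ) : ℂ)^2*Complex.I + ((4):ℂ)*a*((‖a‖ : ℝ) : ℂ)^4*Complex.I) * hπ2 + (((4):ℂ)*a*((starRingEnd ℂ) a)*((‖a‖ : ℝ) : ℂ)^2 + ((-8):ℂ)*a*((starRingEnd ℂ) a)*((‖a‖ : ℝ) : ℂ)^4 + ((4):ℂ)*a*((starRingEnd ℂ) a)*((‖a‖ : ℝ) : ℂ)^6) * Complex.I_sq
        | linear_combination (((-4):ℂ)*a*((‖a‖ : ℝ) : ℂ)^2 + ((4):ℂ)*a*((‖a‖ : ℝ) : ℂ)^4) * hπ2 + (((4):ℂ)*π^2*a*((‖a‖ : ℝ) : ℂ)^2 + ((-4):ℂ)*π^2*a*((‖a‖ : ℝ) : ℂ)^4) * Complex.I_sq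
      have hMmem : M ∈ span ℂ {ω1, ω2, ω3} := by
        have : M = (4 * ((‖a‖ : ℝ) : ℂ)^2 * (1 - ((‖a‖ : ℝ) : ℂ)^2)^2
            * (starRingEnd ℂ) a)⁻¹
            • ((2 * ((‖a‖ : ℝ) : ℂ)^2 * (((‖a‖ : ℝ) : ℂ) + Complex.I) * π) • ω1
              - (((‖a‖ : ℝ) : ℂ) * (1 - ((‖a‖ : ℝ) : ℂ)^2) * π) • ω2) := by
          rw [← e1, smul_smul, inv_mul_cancel₀ hdet0, one_smul]
        rw [this]
        exact smul_mem _ _ (sub_mem (smul_mem _ _ hm1) (smul_mem _ _ hm2))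
      have hE1mem : η 1 ∈ span ℂ {ω1, ω2, ω3} := by
        have : η 1 = (4 * ((‖a‖ : ℝ) : ℂ)^2 * (1 - ((‖a‖ : ℝ) : ℂ)^2)^2
            * (starRingEnd ℂ) a)⁻¹
            • (((1 - ((‖a‖ : ℝ) : ℂ)^2) * π) • ω2
              - (2 * ((‖a‖ : ℝ) : ℂ) * (((‖a‖ : ℝ) : ℂ) - Complex.I) * π) • ω1) := by
          rw [← e2, smul_smul, inv_mul_cancel₀ hdet0, one_smul]
        rw [this]
        exact smul_mem _ _ (sub_mem (smul_mem _ _ hm2) (smul_mem _ _ hm1))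
      have hE2mem : η 2 ∈ span ℂ {ω1, ω2, ω3} := by
        have : η 2 = (4 * ((‖a‖ : ℝ) : ℂ)^2 * (1 - ((‖a‖ : ℝ) : ℂ)^2)^3)⁻¹ • ω3 := by
          rw [hw3, smul_smul, inv_mul_cancel₀ hT0, one_smul]
        rw [this]
        exact smul_mem _ _ hm3
      rcases hx with rfl | rfl | rfl
      · exact hMmem
      · exact hE1mem
      · exact hE2mem
  · -- d ω1 = 0
    simp [hM, map_add, map_sub, map_smul, h1, h2, h1c, h2c]
  · -- d ω2 = 0
    simp [hM, map_add, map_sub, map_smul, h1, h2, h1c, h2c]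
  · -- structure equation
    rw [map_smul, h3]
    simp only [hM, map_add, map_sub, map_smulₛₗ, hση, hσηb, map_mul, map_one, map_pow,
      Complex.conj_I, Complex.conj_ofReal, map_ofNat,
      mul_add, add_mul, mul_sub, sub_mul, smul_mul_assoc, mul_smul_comm, smul_smul,
      smul_add, smul_sub, smul_neg, neg_smul, mul_neg, neg_mul, neg_neg,
      s10, s20, s21, s30, s31, s32, q0, q1, qb0, qb1, smul_zero, mul_zero, zero_mul,
      add_zero, zero_add]
    match_scalars
    · linear_combination (((-1):ℂ) + ((-2):ℂ)*((‖a‖ : ℝ) : ℂ)*Complex.I + ((-4):ℂ)*((‖a‖ : ℝ) : ℂ)^2*Dc + ((2):ℂ)*((‖a‖ : ℝ) : ℂ)^3*Complex.I + ((1):ℂ)*((‖a‖ : ℝ) : ℂ)^4 + ((-4):ℂ)*((‖a‖ : ℝ) : ℂ)^4*Dc + ((1):ℂ)*a*((starRingEnd ℂ) a) + ((2):ℂ)*a*((starRingEnd ℂ) a)*((‖a‖ : ℝ) : ℂ)*Complex.I + ((4):ℂ)*a*((starRingEnd ℂ) a)*((‖a‖ : ℝ) : ℂ)^2*Dc + ((-2):ℂ)*a*((starRingEnd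 ℂ) a)*((‖a‖ : ℝ) : ℂ)^3*Complex.I + ((-1):ℂ)*a*((starRingEnd ℂ) a)*((‖a‖ : ℝ) : ℂ)^4 + ((4):ℂ)*a*((starRingEnd ℂ) a)*((‖a‖ : ℝ) : ℂ)^4*Dc) * hπc + (((1):ℂ)*((‖a‖ : ℝ) : ℂ) + ((2):ℂ)*((‖a‖ : ℝ) : ℂ)^2*Complex.I + ((-1):ℂ)*((‖a‖ : ℝ) : ℂ)^3 + ((4):ℂ)*((‖a‖ : ℝ) : ℂ)^3*Dc + ((-4):ℂ)*((‖a‖ : ℝ) : ℂ)^4*Complex.I + ((-1):ℂ)*((‖a‖ : ℝ) : ℂ)^5 + ((2):ℂ)*((‖a‖ : ℝ) : ℂ)^6*Complex.I + ((1):ℂ)*((‖a‖ : ℝ) : ℂ)^7 + ((-4):ℂ)*((‖a‖ : ℝ) : ℂ)^7*Dc) * ha2 + (((-1):ℂ)*((‖a‖ : ℝ) : ℂ) + ((1):ℂ)*((‖a‖ : ℝ) : ℂ)^3 + ((1):ℂ)*((‖a‖ : ℝ) : ℂ)^5 + ((-1):ℂ)*((‖a‖ : ℝ) : ℂ)^7)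 * hD4 + (((4):ℂ)*π*((starRingEnd ℂ) π)*((‖a‖ : ℝ) : ℂ)^2*Dc + ((-4):ℂ)*π*((starRingEnd ℂ) π)*a*((starRingEnd ℂ) a)*((‖a‖ : ℝ) : ℂ)^2*Dc) * Complex.I_sq
    · linear_combination (((-1):ℂ)*((‖a‖ : ℝ) : ℂ) + ((2):ℂ)*((‖a‖ : ℝ) : ℂ)^2*Complex.I + ((4):ℂ)*((‖a‖ : ℝ) : ℂ)^3*Dc + ((-2):ℂ)*((‖a‖ : ℝ) : ℂ)^4*Complex.I + ((8):ℂ)*((‖a‖ : ℝ) : ℂ)^4*Dc*Complex.I + ((1):ℂ)*((‖a‖ : ℝ) : ℂ)^5 + ((-4):ℂ)*((‖a‖ : ℝ) : ℂ)^5*Dc + ((-1):ℂ)*a*((starRingEnd ℂ) a)*Complex.I + ((2):ℂ)*a*((starRingEnd ℂ) a)*((‖a‖ : ℝ) : ℂ) + ((-4):ℂ)*a*((starRingEnd ℂ) a)*((‖a‖ : ℝ) : ℂ)^2*Dc*Complex.I + ((-2):ℂ)*a*((starRingEnd ℂ) a)*((‖a‖ : ℝ) : ℂ)^3 + ((1):ℂ)*a*((starRingEnd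 ℂ) a)*((‖a‖ : ℝ) : ℂ)^4*Complex.I + ((-4):ℂ)*a*((starRingEnd ℂ) a)*((‖a‖ : ℝ) : ℂ)^4*Dc*Complex.I) * hπc + (((-1):ℂ)*((‖a‖ : ℝ) : ℂ)*Complex.I + ((2):ℂ)*((‖a‖ : ℝ) : ℂ)^2 + ((1):ℂ)*((‖a‖ : ℝ) : ℂ)^3*Complex.I + ((-4):ℂ)*((‖a‖ : ℝ) : ℂ)^3*Dc*Complex.I + ((-4):ℂ)*((‖a‖ : ℝ) : ℂ)^4 + ((1):ℂ)*((‖a‖ : ℝ) : ℂ)^5*Complex.I + ((2):ℂ)*((‖a‖ : ℝ) : ℂ)^6 + ((-1):ℂ)*((‖a‖ : ℝ) : ℂ)^7*Complex.I + ((4):ℂ)*((‖a‖ : ℝ) : ℂ)^7*Dc*Complex.I) * ha2 + (((1):ℂ)*((‖a‖ : ℝ) : ℂ)^2 + ((1):ℂ)*((‖a‖ : ℝ) : ℂ)^3*Complex.I + ((-2):ℂ)*((‖a‖ : ℝ) : ℂ)^4 + ((-2):ℂ)*((‖a‖ : ℝ) : ℂ)^5*Complex.I + ((1):ℂ)*((‖a‖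 : ℝ) : ℂ)^6 + ((1):ℂ)*((‖a‖ : ℝ) : ℂ)^7*Complex.I) * hD4 + (((-4):ℂ)*π*((starRingEnd ℂ) π)*((‖a‖ : ℝ) : ℂ)^3*Dc + ((-2):ℂ)*π*((starRingEnd ℂ) π)*a*((starRingEnd ℂ) a)*((‖a‖ : ℝ) : ℂ) + ((4):ℂ)*π*((starRingEnd ℂ) π)*a*((starRingEnd ℂ) a)*((‖a‖ : ℝ) : ℂ)^2*Dc*Complex.I + ((2):ℂ)*π*((starRingEnd ℂ) π)*a*((starRingEnd ℂ) a)*((‖a‖ : ℝ) : ℂ)^3) * Complex.I_sq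
    · linear_combination (((4):ℂ)*a*((‖a‖ : ℝ) : ℂ)^2*Complex.I + ((-4):ℂ)*a*((‖a‖ : ℝ) : ℂ)^4*Complex.I) * hπ2 + (((-1):ℂ)*((‖a‖ : ℝ) : ℂ) + ((-2):ℂ)*((‖a‖ : ℝ) : ℂ)^2*Complex.I + ((4):ℂ)*((‖a‖ : ℝ) : ℂ)^3*Dc + ((2):ℂ)*((‖a‖ : ℝ) : ℂ)^4*Complex.I + ((-8):ℂ)*((‖a‖ : ℝ) : ℂ)^4*Dc*Complex.I + ((1):ℂ)*((‖a‖ : ℝ) : ℂ)^5 + ((-4):ℂ)*((‖a‖ : ℝ) : ℂ)^5*Dc + ((1):ℂ)*a*((starRingEnd ℂ) a)*Complex.I + ((-2):ℂ)*a*((starRingEnd ℂ) a)*((‖a‖ : ℝ) : ℂ) + ((4):ℂ)*a*((starRingEnd ℂ) a)*((‖a‖ : ℝ) : ℂ)^2*Dc*Complex.I + ((2):ℂ)*a*((starRingEnd ℂ) a)*((‖a‖ : ℝ) : ℂ)^3 + ((-1):ℂ)*a*((starRingEnd ℂ) a)*((‖a‖ : ℝ) : ℂ)^4*Complex.I + ((4):ℂ)*a*((starRingEnd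 ℂ) a)*((‖a‖ : ℝ) : ℂ)^4*Dc*Complex.I) * hπc + (((1):ℂ)*((‖a‖ : ℝ) : ℂ)*Complex.I + ((2):ℂ)*((‖a‖ : ℝ) : ℂ)^2 + ((-1):ℂ)*((‖a‖ : ℝ) : ℂ)^3*Complex.I + ((4):ℂ)*((‖a‖ : ℝ) : ℂ)^3*Dc*Complex.I + ((-4):ℂ)*((‖a‖ : ℝ) : ℂ)^4 + ((-1):ℂ)*((‖a‖ : ℝ) : ℂ)^5*Complex.I + ((2):ℂ)*((‖a‖ : ℝ) : ℂ)^6 + ((1):ℂ)*((‖a‖ : ℝ) : ℂ)^7*Complex.I + ((-4):ℂ)*((‖a‖ : ℝ) : ℂ)^7*Dc*Complex.I) * ha2 + (((1):ℂ)*((‖a‖ : ℝ) : ℂ)^2 + ((-1):ℂ)*((‖a‖ : ℝ) : ℂ)^3*Complex.I + ((-2):ℂ)*((‖a‖ : ℝ) : ℂ)^4 + ((2):ℂ)*((‖a‖ : ℝ) : ℂ)^5*Complex.I + ((1):ℂ)*((‖a‖ : ℝ) : ℂ)^6 + ((-1):ℂ)*((‖a‖ : ℝ) : ℂ)^7*Complex.I)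 * hD4 + (((-4):ℂ)*a*((starRingEnd ℂ) a)*((‖a‖ : ℝ) : ℂ)^2 + ((8):ℂ)*a*((starRingEnd ℂ) a)*((‖a‖ : ℝ) : ℂ)^4 + ((-4):ℂ)*a*((starRingEnd ℂ) a)*((‖a‖ : ℝ) : ℂ)^6 + ((-4):ℂ)*π*((starRingEnd ℂ) π)*((‖a‖ : ℝ) : ℂ)^3*Dc + ((2):ℂ)*π*((starRingEnd ℂ) π)*a*((starRingEnd ℂ) a)*((‖a‖ : ℝ) : ℂ) + ((-4):ℂ)*π*((starRingEnd ℂ) π)*a*((starRingEnd ℂ) a)*((‖a‖ : ℝ) : ℂ)^2*Dc*Complex.I + ((-2):ℂ)*π*((starRingEnd ℂ) π)*a*((starRingEnd ℂ) a)*((‖a‖ : ℝ) : ℂ)^3) * Complex.I_sq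
    · linear_combination (((-4):ℂ)*((‖a‖ : ℝ) : ℂ)^2*Complex.I + ((4):ℂ)*((‖a‖ : ℝ) : ℂ)^4*Complex.I) * hπ2 + (((-1):ℂ)*((starRingEnd ℂ) a)*Complex.I + ((3):ℂ)*((starRingEnd ℂ) a)*((‖a‖ : ℝ) : ℂ) + ((2):ℂ)*((starRingEnd ℂ) a)*((‖a‖ : ℝ) : ℂ)^2*Complex.I + ((-4):ℂ)*((starRingEnd ℂ) a)*((‖a‖ : ℝ) : ℂ)^2*Dc*Complex.I + ((-2):ℂ)*((starRingEnd ℂ) a)*((‖a‖ : ℝ) : ℂ)^3 + ((-4):ℂ)*((starRingEnd ℂ) a)*((‖a‖ : ℝ) : ℂ)^3*Dc + ((-1):ℂ)*((starRingEnd ℂ) a)*((‖a‖ : ℝ) : ℂ)^4*Complex.I + ((4):ℂ)*((starRingEnd ℂ) a)*((‖a‖ : ℝ) : ℂ)^4*Dc*Complex.I + ((-1):ℂ)*((starRingEnd ℂ) a)*((‖a‖ : ℝ) : ℂ)^5 + ((4):ℂ)*((starRingEnd ℂ) a)*((‖a‖ : ℝ) : ℂ)^5*Dc) * hπc + (((-1):ℂ)*((starRingEnd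 ℂ) a)*((‖a‖ : ℝ) : ℂ)*Complex.I + ((-1):ℂ)*((starRingEnd ℂ) a)*((‖a‖ : ℝ) : ℂ)^2 + ((2):ℂ)*((starRingEnd ℂ) a)*((‖a‖ : ℝ) : ℂ)^3*Complex.I + ((2):ℂ)*((starRingEnd ℂ) a)*((‖a‖ : ℝ) : ℂ)^4 + ((-1):ℂ)*((starRingEnd ℂ) a)*((‖a‖ : ℝ) : ℂ)^5*Complex.I + ((-1):ℂ)*((starRingEnd ℂ) a)*((‖a‖ : ℝ) : ℂ)^6) * hD4 + (((4):ℂ)*((starRingEnd ℂ) a)*((‖a‖ : ℝ) : ℂ)^2 + ((-8):ℂ)*((starRingEnd ℂ) a)*((‖a‖ : ℝ) : ℂ)^4 + ((4):ℂ)*((starRingEnd ℂ) a)*((‖a‖ : ℝ) : ℂ)^6 + ((-2):ℂ)*π*((starRingEnd ℂ) π)*((starRingEnd ℂ) a)*((‖a‖ : ℝ) : ℂ) + ((4):ℂ)*π*((starRingEnd ℂ) π)*((starRingEnd ℂ) a)*((‖a‖ : ℝ) : ℂ)^2*Dc*Complex.I + ((2):ℂ)*π*((starRingEnd ℂ) π)*((starRingEnd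 ℂ) a)*((‖a‖ : ℝ) : ℂ)^3 + ((4):ℂ)*π*((starRingEnd ℂ) π)*((starRingEnd ℂ) a)*((‖a‖ : ℝ) : ℂ)^3*Dc) * Complex.I_sq
    · linear_combination (((-1):ℂ)*a*Complex.I + ((1):ℂ)*a*((‖a‖ : ℝ) : ℂ) + ((2):ℂ)*a*((‖a‖ : ℝ) : ℂ)^2*Complex.I + ((-4):ℂ)*a*((‖a‖ : ℝ) : ℂ)^2*Dc*Complex.I + ((-2):ℂ)*a*((‖a‖ : ℝ) : ℂ)^3 + ((4):ℂ)*a*((‖a‖ : ℝ) : ℂ)^3*Dc + ((-1):ℂ)*a*((‖a‖ : ℝ) : ℂ)^4*Complex.I + ((4):ℂ)*a*((‖a‖ : ℝ) : ℂ)^4*Dc*Complex.I + ((1):ℂ)*a*((‖a‖ : ℝ) : ℂ)^5 + ((-4):ℂ)*a*((‖a‖ : ℝ) : ℂ)^5*Dc) * hπc + (((-1):ℂ)*a*((‖a‖ : ℝ) : ℂ)*Complex.I + ((1):ℂ)*a*((‖a‖ : ℝ) : ℂ)^2 + ((2):ℂ)*a*((‖a‖ : ℝ) : ℂ)^3*Complex.I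 + ((-2):ℂ)*a*((‖a‖ : ℝ) : ℂ)^4 + ((-1):ℂ)*a*((‖a‖ : ℝ) : ℂ)^5*Complex.I + ((1):ℂ)*a*((‖a‖ : ℝ) : ℂ)^6) * hD4 + (((-2):ℂ)*π*((starRingEnd ℂ) π)*a*((‖a‖ : ℝ) : ℂ) + ((4):ℂ)*π*((starRingEnd ℂ) π)*a*((‖a‖ : ℝ) : ℂ)^2*Dc*Complex.I + ((2):ℂ)*π*((starRingEnd ℂ) π)*a*((‖a‖ : ℝ) : ℂ)^3 + ((-4):ℂ)*π*((starRingEnd ℂ) π)*a*((‖a‖ : ℝ) : ℂ)^3*Dc) * Complex.I_sq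
    · linear_combination (((4):ℂ)*a*((‖a‖ : ℝ) : ℂ)^2 + ((-4):ℂ)*a*((‖a‖ : ℝ) : ℂ)^4) * hπ2 + (((-1):ℂ)*((‖a‖ : ℝ) : ℂ)^2 + ((2):ℂ)*((‖a‖ : ℝ) : ℂ)^3*Complex.I + ((-4):ℂ)*((‖a‖ : ℝ) : ℂ)^4*Dc + ((-2):ℂ)*((‖a‖ : ℝ) : ℂ)^5*Complex.I + ((1):ℂ)*((‖a‖ : ℝ) : ℂ)^6 + ((-4):ℂ)*((‖a‖ : ℝ) : ℂ)^6*Dc + ((1):ℂ)*a*((starRingEnd ℂ) a) + ((2):ℂ)*a*((starRingEnd ℂ) a)*((‖a‖ : ℝ) : ℂ)*Complex.I + ((4):ℂ)*a*((starRingEnd ℂ) a)*((‖a‖ : ℝ) : ℂ)^2*Dc + ((-2):ℂ)*a*((starRingEnd ℂ) a)*((‖a‖ : ℝ) : ℂ)^3*Complex.I + ((-1):ℂ)*a*((starRingEnd ℂ) a)*((‖a‖ : ℝ) : ℂ)^4 + ((4):ℂ)*a*((starRingEnd ℂ) a)*((‖a‖ : ℝ) : ℂ)^4*Dc) * hπc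 + (((1):ℂ)*((‖a‖ : ℝ) : ℂ) + ((-2):ℂ)*((‖a‖ : ℝ) : ℂ)^2*Complex.I + ((-1):ℂ)*((‖a‖ : ℝ) : ℂ)^3 + ((4):ℂ)*((‖a‖ : ℝ) : ℂ)^3*Dc + ((4):ℂ)*((‖a‖ : ℝ) : ℂ)^4*Complex.I + ((-1):ℂ)*((‖a‖ : ℝ) : ℂ)^5 + ((-2):ℂ)*((‖a‖ : ℝ) : ℂ)^6*Complex.I + ((1):ℂ)*((‖a‖ : ℝ) : ℂ)^7 + ((-4):ℂ)*((‖a‖ : ℝ) : ℂ)^7*Dc) * ha2 + (((4):ℂ)*π*((starRingEnd ℂ) π)*((‖a‖ : ℝ) : ℂ)^4*Dc + ((-1):ℂ)*π*((starRingEnd ℂ) π)*a*((starRingEnd ℂ) a) + ((-2):ℂ)*π*((starRingEnd ℂ) π)*a*((starRingEnd ℂ) a)*((‖a‖ : ℝ) : ℂ)*Complex.I + ((-4):ℂ)*π*((starRingEnd ℂ) π)*a*((starRingEnd ℂ) a)*((‖a‖ : ℝ) : ℂ)^2*Dc + ((4):ℂ)*π*((starRingEnd ℂ) π)*a*((starRingEnd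 ℂ) a)*((‖a‖ : ℝ) : ℂ)^2*Dc*Complex.I^2 + ((2):ℂ)*π*((starRingEnd ℂ) π)*a*((starRingEnd ℂ) a)*((‖a‖ : ℝ) : ℂ)^3*Complex.I + ((1):ℂ)*π*((starRingEnd ℂ) π)*a*((starRingEnd ℂ) a)*((‖a‖ : ℝ) : ℂ)^4 + ((-4):ℂ)*π*((starRingEnd ℂ) π)*a*((starRingEnd ℂ) a)*((‖a‖ : ℝ) : ℂ)^4*Dc + ((-4):ℂ)*π^2*a*((‖a‖ : ℝ) : ℂ)^2 + ((4):ℂ)*π^2*a*((‖a‖ : ℝ) : ℂ)^4) * Complex.I_sq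

end
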